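/- The two-normal-form transformation τ₂ preserves the generated language: for every CFG G, the language of τ₂(G) equals the language of G. -/

import Mathlib

/-! Formalization of Earley parsing and the Nederhof–Satta variant. -/

variable {T N : Type}

/-- A context-free grammar: a start nonterminal and a set of productions. -/
structure CFG (T N : Type) where
  initial : N
  rules : Set (N × List (Symbol T N))

/-- One rewriting step of the grammar. -/
def CFG.Produces (g : CFG T N) (u v : List (Symbol T N)) : Prop :=
  ∃ A α p q, (A, α) ∈ g.rules ∧ u = p ++ [Symbol.nonterminal A] ++ q ∧ v = p ++ α ++ q

/-- The derivation relation ⇒* (reflexive-transitive closure of rewriting). -/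
def CFG.Derives (g : CFG T N) : List (Symbol T N) → List (Symbol T N) → Prop :=
  Relation.ReflTransGen g.Produces

/-- The language of the grammar: { w | S ⇒* w }. -/
def CFG.language (g : CFG T N) : Set (List T) :=
  { w | g.Derives [Symbol.nonterminal g.initial] (w.map Symbol.terminal) }

/-- `inputSlice w i j` is the substring a_{i+1}⋯a_j of `w` (0-based: w[i..j)), as symbols. -/
def inputSlice (w : List T) (i j : ℕ) : List (Symbol T N) :=
  ((w.take j).drop i).map Symbol.terminal

/-- The least Earley table: `Earley g w A α β i j` means the dotted item
[A → α • β] is inserted in E_{i,j}. -/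
inductive Earley (g : CFG T N) (w : List T) :
    N → List (Symbol T N) → List (Symbol T N) → ℕ → ℕ → Prop where
  | init {α} : (g.initial, α) ∈ g.rules → Earley g w g.initial [] α 0 0
  | predict {B α A β i j γ} : Earley g w B α (Symbol.nonterminal A :: β) i j →
      (A, γ) ∈ g.rules → Earley g w A [] γ j j
  | scan {A α a β i j} : Earley g w A α (Symbol.terminal a :: β) i j →
      w[j]? = some a → Earley g w A (α ++ [Symbol.terminal a]) β i (j + 1)
  | complete {A α B β i k γ j} : Earley g w A α (Symbol.nonterminal B :: β) i k →
      Earley g w B γ [] k j → (B, γ) ∈ g.rules →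
      Earley g w A (α ++ [Symbol.nonterminal B]) β i j

mutual
  /-- Forward part of the variant: `VarU g w β j` means suffix item [β] ∈ U_j. -/
  inductive VarU (g : CFG T N) (w : List T) : List (Symbol T N) → ℕ → Prop where
    | init {α} : (g.initial, α) ∈ g.rules → VarU g w α 0
    | predict {A β j γ} : VarU g w (Symbol.nonterminal A :: β) j →
        (A, γ) ∈ g.rules → VarU g w γ j
    | scan {a β j} : VarU g w (Symbol.terminal a :: β) j → w[j]? = some a →
        VarU g w β (j + 1)
    | complete {B β k γ j} : VarU g w (Symbol.nonterminal B :: β) k → (B, γ) ∈ g.rules →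
        VarT g w γ k j → VarU g w β j

  /-- Backward part of the variant: `VarT g w β j m` means suffix item [β] ∈ T_{j,m}. -/
  inductive VarT (g : CFG T N) (w : List T) : List (Symbol T N) → ℕ → ℕ → Prop where
    | empty {m} : VarU g w [] m → VarT g w [] m m
    | scan {a β j m} : VarU g w (Symbol.terminal a :: β) j → w[j]? = some a →
        VarT g w β (j + 1) m → VarT g w (Symbol.terminal a :: β) j m
    | complete {B β k γ j m} : VarU g w (Symbol.nonterminal B :: β) k → (B, γ) ∈ g.rules →
        VarT g w γ k j → VarT g w β j m → VarT g w (Symbol.nonterminal B :: β) k m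
end

/-- Suffix items of G: suffixes of right-hand sides of productions. -/
def suffixItems (g : CFG T N) : Set (List (Symbol T N)) :=
  {β | ∃ A α, (A, α ++ β) ∈ g.rules}

/-- Embedding of symbols of G into symbols of τ₂(G). -/
def embSymbol : Symbol T N → Symbol T (N ⊕ List (Symbol T N))
  | Symbol.terminal a => Symbol.terminal a
  | Symbol.nonterminal A => Symbol.nonterminal (Sum.inl A)

/-- The two-normal-form transformation τ₂. -/
def tau2 (g : CFG T N) : CFG T (N ⊕ List (Symbol T N)) where
  initial := Sum.inl g.initial
  rules :=
    {r | (∃ A X α, (A, X :: α) ∈ g.rules ∧ 1 < α.length ∧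
            r = (Sum.inl A, [embSymbol X, Symbol.nonterminal (Sum.inr α)])) ∨
         (∃ A α, (A, α) ∈ g.rules ∧ α.length ≤ 2 ∧
            r = (Sum.inl A, α.map embSymbol)) ∨
         (∃ X α, (X :: α) ∈ suffixItems g ∧ 1 < α.length ∧
            r = (Sum.inr (X :: α), [embSymbol X, Symbol.nonterminal (Sum.inr α)])) ∨
         (∃ X Y, [X, Y] ∈ suffixItems g ∧
            r = (Sum.inr [X, Y], [embSymbol X, embSymbol Y]))}

namespace Tau2Aux

variable {g : CFG T N}

lemma produces_append {g : CFG T N} {u v : List (Symbol T N)} (h : g.Produces u v)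
    (p q : List (Symbol T N)) : g.Produces (p ++ u ++ q) (p ++ v ++ q) := by
  obtain ⟨A, α, p', q', hr, hu, hv⟩ := h
  exact ⟨A, α, p ++ p', q' ++ q, hr, by simp [hu], by simp [hv]⟩

lemma derives_append {g : CFG T N} {u v : List (Symbol T N)} (h : g.Derives u v)
    (p q : List (Symbol T N)) : g.Derives (p ++ u ++ q) (p ++ v ++ q) := by
  induction h with
  | refl => exact Relation.ReflTransGen.refl
  | tail _ step ih => exact ih.tail (produces_append step p q)

/-- Expansion of a symbol of τ₂(G) back into a string over G. -/
def expand : Symbol T (N ⊕ List (Symbol T N)) → List (Symbol T N)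
  | Symbol.terminal a => [Symbol.terminal a]
  | Symbol.nonterminal (Sum.inl A) => [Symbol.nonterminal A]
  | Symbol.nonterminal (Sum.inr β) => β

def expandStr (u : List (Symbol T (N ⊕ List (Symbol T N)))) : List (Symbol T N) :=
  u.flatMap expand

@[simp] lemma expand_emb (s : Symbol T N) : expand (embSymbol s) = [s] := by
  cases s <;> rfl

@[simp] lemma expand_term (a : T) :
    expand (Symbol.terminal a : Symbol T (N ⊕ List (Symbol T N))) = [Symbol.terminal a] := rfl

@[simp] lemma expand_inl (A : N) :
    expand (Symbol.nonterminal (Sum.inl A) : Symbol T (N ⊕ List (Symbol T N))) =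
      [Symbol.nonterminal A] := rfl

@[simp] lemma expand_inr (β : List (Symbol T N)) :
    expand (Symbol.nonterminal (Sum.inr β) : Symbol T (N ⊕ List (Symbol T N))) = β := rfl

@[simp] lemma expandStr_nil : expandStr ([] : List (Symbol T (N ⊕ List (Symbol T N)))) = [] := rfl

@[simp] lemma expandStr_cons (x : Symbol T (N ⊕ List (Symbol T N))) (l) :
    expandStr (x :: l) = expand x ++ expandStr l := by simp [expandStr]

@[simp] lemma expandStr_append (u v : List (Symbol T (N ⊕ List (Symbol T N)))) :
    expandStr (u ++ v) = expandStr u ++ expandStr v := by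
  simp [expandStr]

@[simp] lemma expandStr_map_emb (α : List (Symbol T N)) :
    expandStr (α.map embSymbol) = α := by
  induction α with
  | nil => rfl
  | cons x xs ih => simp only [List.map_cons, expandStr, List.flatMap_cons, expand_emb] at ih ⊢; simp [ih]

lemma back_produces {u v} (h : (tau2 g).Produces u v) :
    g.Derives (expandStr u) (expandStr v) := by
  obtain ⟨A, α, p, q, hr, hu, hv⟩ := h
  subst hu hv
  rcases hr with ⟨B, X, β, hB, _, hre⟩ | ⟨B, β, hB, _, hre⟩ |
      ⟨X, β, _, _, hre⟩ | ⟨X, Y, _, hre⟩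
  · cases hre
    refine Relation.ReflTransGen.single ?_
    refine ⟨B, X :: β, expandStr p, expandStr q, hB, by simp, ?_⟩
    simp
  · cases hre
    refine Relation.ReflTransGen.single ?_
    exact ⟨B, β, expandStr p, expandStr q, hB, by simp, by simp⟩
  · cases hre
    have : expandStr [Symbol.nonterminal (Sum.inr (X :: β))] =
        expandStr [embSymbol X, Symbol.nonterminal (Sum.inr β)] := by
      simp [expandStr]
    simp only [expandStr_append, this]
    exact Relation.ReflTransGen.refl
  · cases hre
    have : expandStr [Symbol.nonterminal (Sum.inr [X, Y])] =
        expandStr [embSymbol X, embSymbol Y] := by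
      simp [expandStr]
    simp only [expandStr_append, this]
    exact Relation.ReflTransGen.refl

lemma back_derives {u v} (h : (tau2 g).Derives u v) :
    g.Derives (expandStr u) (expandStr v) := by
  induction h with
  | refl => exact Relation.ReflTransGen.refl
  | tail _ step ih => exact ih.trans (back_produces step)

lemma suffix_derives : ∀ (β : List (Symbol T N)), β ∈ suffixItems g → 2 ≤ β.length →
    (tau2 g).Derives [Symbol.nonterminal (Sum.inr β)] (β.map embSymbol)
  | [], _, h => by simp at h
  | [X], _, h => by simp at h
  | [X, Y], hβ, _ => by
    refine Relation.ReflTransGen.single ?_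
    refine ⟨Sum.inr [X, Y], [embSymbol X, embSymbol Y], [], [], ?_, by simp, by simp⟩
    exact Or.inr (Or.inr (Or.inr ⟨X, Y, hβ, rfl⟩))
  | X :: Y :: Z :: rest', hβ, _ => by
    have hsuf : (Y :: Z :: rest') ∈ suffixItems g := by
      obtain ⟨A, α, hA⟩ := hβ
      exact ⟨A, α ++ [X], by simpa using hA⟩
    have hstep : (tau2 g).Produces [Symbol.nonterminal (Sum.inr (X :: Y :: Z :: rest'))]
        [embSymbol X, Symbol.nonterminal (Sum.inr (Y :: Z :: rest'))] := by
      refine ⟨Sum.inr (X :: Y :: Z :: rest'),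
        [embSymbol X, Symbol.nonterminal (Sum.inr (Y :: Z :: rest'))], [], [], ?_,
        by simp, by simp⟩
      exact Or.inr (Or.inr (Or.inl ⟨X, Y :: Z :: rest', hβ, by simp, rfl⟩))
    have hrest := suffix_derives (Y :: Z :: rest') hsuf (by simp)
    refine Relation.ReflTransGen.head hstep ?_
    have := derives_append hrest [embSymbol X] []
    simpa [CFG.Derives] using this

lemma rule_derives {A α} (hA : (A, α) ∈ g.rules) :
    (tau2 g).Derives [Symbol.nonterminal (Sum.inl A)] (α.map embSymbol) := by
  by_cases hlen : α.length ≤ 2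
  · refine Relation.ReflTransGen.single ?_
    exact ⟨Sum.inl A, α.map embSymbol, [], [], Or.inr (Or.inl ⟨A, α, hA, hlen, rfl⟩),
      by simp, by simp⟩
  · match α, hlen with
    | X :: rest, hlen =>
      have hrl : 1 < rest.length := by simp at hlen; omega
      have hstep : (tau2 g).Produces [Symbol.nonterminal (Sum.inl A)]
          [embSymbol X, Symbol.nonterminal (Sum.inr rest)] :=
        ⟨Sum.inl A, [embSymbol X, Symbol.nonterminal (Sum.inr rest)], [], [],
          Or.inl ⟨A, X, rest, hA, hrl, rfl⟩, by simp, by simp⟩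
      have hsuf : rest ∈ suffixItems g := ⟨A, [X], hA⟩
      have hrest := suffix_derives rest hsuf (by omega)
      refine Relation.ReflTransGen.head hstep ?_
      have := derives_append hrest [embSymbol X] []
      simpa [CFG.Derives] using this
    | [], hlen => simp at hlen

lemma fwd_produces {u v} (h : g.Produces u v) :
    (tau2 g).Derives (u.map embSymbol) (v.map embSymbol) := by
  obtain ⟨A, α, p, q, hr, hu, hv⟩ := h
  subst hu hv
  have := derives_append (rule_derives hr) (p.map embSymbol) (q.map embSymbol)
  simpa [embSymbol] using this

lemma fwd_derives {u v} (h : g.Derives u v) :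
    (tau2 g).Derives (u.map embSymbol) (v.map embSymbol) := by
  induction h with
  | refl => exact Relation.ReflTransGen.refl
  | tail _ step ih => exact ih.trans (fwd_produces step)

lemma map_term_emb (w : List T) :
    (w.map Symbol.terminal : List (Symbol T (N ⊕ List (Symbol T N)))) =
      (w.map Symbol.terminal : List (Symbol T N)).map embSymbol := by
  simp [List.map_map]
  exact fun a _ => rfl

end Tau2Aux

open Tau2Aux in
/-- τ₂ preserves the generated language. -/
theorem tau2_language_eq (g : CFG T N) : (tau2 g).language = g.language := by
  ext w
  constructor
  · intro h
    have h2 := back_derives (g := g) h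
    have e1 : expandStr [Symbol.nonterminal ((tau2 g).initial)] =
        [Symbol.nonterminal g.initial] := rfl
    have e2 : expandStr (w.map Symbol.terminal : List (Symbol T (N ⊕ List (Symbol T N)))) =
        (w.map Symbol.terminal : List (Symbol T N)) := by
      rw [map_term_emb, expandStr_map_emb]
    rw [e1, e2] at h2
    exact h2
  · intro h
    have h2 := fwd_derives (g := g) h
    show (tau2 g).Derives [Symbol.nonterminal (Sum.inl g.initial)] (w.map Symbol.terminal)
    rw [map_term_emb]
    simpa [embSymbol] using h2
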